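/- (Fisher information for r in the normal-moment family with fixed mode; basis of the Jeffreys prior in equation (14).) Fix m > 0 and λ ≠ 0. Define ℓ(r) = log j(λ | m²/(2r), r) for r > 0, i.e. the log of the normal-moment density of order r whose scale is chosen so that the modes are at ±m. Then ℓ is twice differentiable in r on (0,∞), the second derivative does not depend on λ or m, and −ℓ''(r) = ψ₁(r + 1/2) − 1/r + 1/(2r²), where ψ₁ denotes the trigamma function (the second derivative of log Γ). -/

import Mathlib

open Real MeasureTheory Filter

/-- Normal-moment density `j(λ | τ², r)` of order `r`, as a function of `τ² = τsq`. -/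
noncomputable def normalMomentPdfSq (τsq r l : ℝ) : ℝ :=
  (l ^ 2) ^ r / ((2 * τsq) ^ (r + 1 / 2) * Real.Gamma (r + 1 / 2)) *
    Real.exp (-l ^ 2 / (2 * τsq))

/-- Trigamma function: the second derivative of `log Γ` on `(0, ∞)`. -/
noncomputable def trigamma (x : ℝ) : ℝ :=
  deriv (deriv (fun y : ℝ => Real.log (Real.Gamma y))) x

lemma analyticAt_realGamma {x : ℝ} (hx : 0 < x) : AnalyticAt ℝ Real.Gamma x := by
  have hC : AnalyticAt ℂ Complex.Gamma (x : ℂ) := by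
    have hd : DifferentiableOn ℂ Complex.Gamma {s : ℂ | 0 < s.re} := by
      intro s hs
      refine (Complex.differentiableAt_Gamma s ?_).differentiableWithinAt
      intro n hn
      have : (0:ℝ) < (-(n:ℂ)).re := hn ▸ hs
      simp at this
      exact (Nat.cast_nonneg (α := ℝ) n).not_gt this
    have hopen : IsOpen {s : ℂ | 0 < s.re} := isOpen_lt continuous_const Complex.continuous_re
    exact hd.analyticAt (hopen.mem_nhds (by simpa using hx))
  have h1 : AnalyticAt ℝ (fun y : ℝ => (Complex.Gamma (y : ℂ)).re) x := by
    exact (Complex.reCLM.analyticAt _).comp ((hC.restrictScalars).comp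
      (Complex.ofRealCLM.analyticAt x))
  refine h1.congr (Filter.Eventually.of_forall fun y => ?_)
  simp only [Complex.Gamma_ofReal, Complex.ofReal_re]

lemma contDiffOn_logGamma :
    ContDiffOn ℝ 2 (fun y : ℝ => Real.log (Real.Gamma y)) (Set.Ioi 0) := by
  intro x hx
  have hx' : (0:ℝ) < x := hx
  have hG : ContDiffAt ℝ 2 Real.Gamma x := (analyticAt_realGamma hx').contDiffAt
  have hlog : ContDiffAt ℝ 2 Real.log (Real.Gamma x) :=
    Real.contDiffAt_log.2 (Real.Gamma_pos_of_pos hx').ne'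
  exact (hlog.comp x hG).contDiffWithinAt

lemma hasDerivAt_logGamma {x : ℝ} (hx : 0 < x) :
    HasDerivAt (fun y : ℝ => Real.log (Real.Gamma y))
      (deriv (fun y : ℝ => Real.log (Real.Gamma y)) x) x := by
  have := (contDiffOn_logGamma.differentiableOn (by norm_num)).differentiableAt
    ((isOpen_Ioi).mem_nhds hx)
  exact this.hasDerivAt

lemma hasDerivAt_deriv_logGamma {x : ℝ} (hx : 0 < x) :
    HasDerivAt (deriv (fun y : ℝ => Real.log (Real.Gamma y))) (trigamma x) x := by
  have h := contDiffOn_logGamma.deriv_of_isOpen isOpen_Ioi (m := 1) (by norm_num)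
  have := (h.differentiableOn (by norm_num)).differentiableAt ((isOpen_Ioi).mem_nhds hx)
  exact this.hasDerivAt

/-- Fisher information for `r` in the normal-moment family with fixed mode `m`:
with `ℓ(r) = log j(λ | m²/(2r), r)`, `ℓ` is twice differentiable on `(0, ∞)` and
`−ℓ''(r) = ψ₁(r + 1/2) − 1/r + 1/(2r²)`, independent of `λ` and `m`. -/
theorem normal_moment_fisher_information (m lam : ℝ) (hm : 0 < m) (hlam : lam ≠ 0) :
    ∃ ℓ' ℓ'' : ℝ → ℝ,
      (∀ r : ℝ, 0 < r →
        HasDerivAt (fun s : ℝ => Real.log (normalMomentPdfSq (m ^ 2 / (2 * s)) s lam))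
          (ℓ' r) r) ∧
      (∀ r : ℝ, 0 < r → HasDerivAt ℓ' (ℓ'' r) r) ∧
      (∀ r : ℝ, 0 < r →
        -ℓ'' r = trigamma (r + 1 / 2) - 1 / r + 1 / (2 * r ^ 2)) := by
  have hm2 : (0:ℝ) < m ^ 2 := by positivity
  have hl2 : (0:ℝ) < lam ^ 2 := by positivity
  refine ⟨fun s => Real.log (lam ^ 2) - Real.log (m ^ 2) + Real.log s + 1 + 1 / (2 * s)
      - deriv (fun y : ℝ => Real.log (Real.Gamma y)) (s + 1 / 2) - lam ^ 2 / m ^ 2,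
    fun s => 1 / s - 1 / (2 * s ^ 2) - trigamma (s + 1 / 2), ?_, ?_, ?_⟩
  · intro r hr
    have heq : (fun s : ℝ => Real.log (normalMomentPdfSq (m ^ 2 / (2 * s)) s lam)) =ᶠ[nhds r]
        (fun s : ℝ => s * Real.log (lam ^ 2) - (s + 1 / 2) * (Real.log (m ^ 2) - Real.log s)
          - Real.log (Real.Gamma (s + 1 / 2)) - (lam ^ 2 / m ^ 2) * s) := by
      filter_upwards [eventually_gt_nhds hr] with s hs
      have h2s : 2 * (m ^ 2 / (2 * s)) = m ^ 2 / s := by field_simp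
      have hb : (0:ℝ) < m ^ 2 / s := by positivity
      have hg : 0 < Real.Gamma (s + 1 / 2) := Real.Gamma_pos_of_pos (by linarith)
      have hrp : (0:ℝ) < (m ^ 2 / s) ^ (s + 1/2 : ℝ) := Real.rpow_pos_of_pos hb _
      rw [normalMomentPdfSq, h2s, Real.log_mul (by positivity) (Real.exp_ne_zero _),
        Real.log_div (by positivity) (by positivity), Real.log_mul hrp.ne' hg.ne',
        Real.log_rpow hl2, Real.log_rpow hb, Real.log_exp,
        Real.log_div hm2.ne' hs.ne']
      field_simp
      ring
    have hid := hasDerivAt_id r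
    have h1 : HasDerivAt (fun s : ℝ => s * Real.log (lam ^ 2)) (Real.log (lam ^ 2)) r := by
      simpa only [one_mul, id_eq] using hid.mul_const (Real.log (lam ^ 2))
    have h2 : HasDerivAt (fun s : ℝ => (s + 1 / 2) * (Real.log (m ^ 2) - Real.log s))
        (1 * (Real.log (m ^ 2) - Real.log r) + (r + 1 / 2) * (0 - r⁻¹)) r :=
      (hid.add_const (1/2)).mul ((hasDerivAt_const r _).sub (Real.hasDerivAt_log hr.ne'))
    have h3 : HasDerivAt (fun s : ℝ => Real.log (Real.Gamma (s + 1 / 2)))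
        (deriv (fun y : ℝ => Real.log (Real.Gamma y)) (r + 1 / 2) * 1) r :=
      (hasDerivAt_logGamma (by linarith)).comp r (hid.add_const (1/2))
    have h4 : HasDerivAt (fun s : ℝ => (lam ^ 2 / m ^ 2) * s) (lam ^ 2 / m ^ 2) r := by
      simpa only [mul_one, id_eq] using (hasDerivAt_id r).const_mul (lam ^ 2 / m ^ 2)
    refine heq.hasDerivAt_iff.mpr ?_
    convert ((h1.sub h2).sub h3).sub h4 using 1
    · rfl
    field_simp
    ring
  · intro r hr
    have hid := hasDerivAt_id r
    have hlog : HasDerivAt Real.log r⁻¹ r := Real.hasDerivAt_log hr.ne'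
    have h12s : HasDerivAt (fun s : ℝ => 1 / (2 * s))
        ((0 * (2 * r) - 1 * 2) / (2 * r) ^ 2) r :=
      (hasDerivAt_const r 1).div (by simpa using hid.const_mul 2) (by positivity)
    have hdg : HasDerivAt
        (fun s : ℝ => deriv (fun y : ℝ => Real.log (Real.Gamma y)) (s + 1 / 2))
        (trigamma (r + 1 / 2) * 1) r :=
      (hasDerivAt_deriv_logGamma (by linarith)).comp r (hid.add_const (1/2))
    have := (((((hasDerivAt_const r (Real.log (lam ^ 2) - Real.log (m ^ 2))).add
      hlog).add (hasDerivAt_const r 1)).add h12s).sub hdg).sub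
      (hasDerivAt_const r (lam ^ 2 / m ^ 2))
    convert this using 1
    · rfl
    · rfl
    · rfl
    field_simp
    ring
  · intro r hr
    ring
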